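/- The 6×6 complex matrix M with rows (0,0,1,√2,√2,1), (1,0,0,1,1-i,√2), (1+i,1,0,0,1,√2 i), (√2 i,√2 i,-1,0,0,-1), (1,1+i,√2 i,1,0,0), (0,1,√2,1-i,1,0) has rank 3, and its entrywise squared modulus |M|⊙|M| equals the slack matrix of the regular hexagon, the circulant-type matrix with rows (0,0,1,2,2,1), (1,0,0,1,2,2), (2,1,0,0,1,2), (2,2,1,0,0,1), (1,2,2,1,0,0), (0,1,2,2,1,0). -/

import Mathlib

section aux
variable {α : Type*}

@[simp] lemma vc1_0 (a : α) (u : Fin 0 → α) : Matrix.vecCons a u (0 : Fin 1) = a := rfl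
@[simp] lemma vc2_0 (a : α) (u : Fin 1 → α) : Matrix.vecCons a u (0 : Fin 2) = a := rfl
@[simp] lemma vc2_1 (a : α) (u : Fin 1 → α) : Matrix.vecCons a u (1 : Fin 2) = u 0 := rfl
@[simp] lemma vc3_0 (a : α) (u : Fin 2 → α) : Matrix.vecCons a u (0 : Fin 3) = a := rfl
@[simp] lemma vc3_1 (a : α) (u : Fin 2 → α) : Matrix.vecCons a u (1 : Fin 3) = u 0 := rfl
@[simp] lemma vc3_2 (a : α) (u : Fin 2 → α) : Matrix.vecCons a u (2 : Fin 3) = u 1 := rfl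
@[simp] lemma vc4_0 (a : α) (u : Fin 3 → α) : Matrix.vecCons a u (0 : Fin 4) = a := rfl
@[simp] lemma vc4_1 (a : α) (u : Fin 3 → α) : Matrix.vecCons a u (1 : Fin 4) = u 0 := rfl
@[simp] lemma vc4_2 (a : α) (u : Fin 3 → α) : Matrix.vecCons a u (2 : Fin 4) = u 1 := rfl
@[simp] lemma vc4_3 (a : α) (u : Fin 3 → α) : Matrix.vecCons a u (3 : Fin 4) = u 2 := rfl
@[simp] lemma vc5_0 (a : α) (u : Fin 4 → α) : Matrix.vecCons a u (0 : Fin 5) = a := rfl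
@[simp] lemma vc5_1 (a : α) (u : Fin 4 → α) : Matrix.vecCons a u (1 : Fin 5) = u 0 := rfl
@[simp] lemma vc5_2 (a : α) (u : Fin 4 → α) : Matrix.vecCons a u (2 : Fin 5) = u 1 := rfl
@[simp] lemma vc5_3 (a : α) (u : Fin 4 → α) : Matrix.vecCons a u (3 : Fin 5) = u 2 := rfl
@[simp] lemma vc5_4 (a : α) (u : Fin 4 → α) : Matrix.vecCons a u (4 : Fin 5) = u 3 := rfl
@[simp] lemma vc6_0 (a : α) (u : Fin 5 → α) : Matrix.vecCons a u (0 : Fin 6) = a := rfl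
@[simp] lemma vc6_1 (a : α) (u : Fin 5 → α) : Matrix.vecCons a u (1 : Fin 6) = u 0 := rfl
@[simp] lemma vc6_2 (a : α) (u : Fin 5 → α) : Matrix.vecCons a u (2 : Fin 6) = u 1 := rfl
@[simp] lemma vc6_3 (a : α) (u : Fin 5 → α) : Matrix.vecCons a u (3 : Fin 6) = u 2 := rfl
@[simp] lemma vc6_4 (a : α) (u : Fin 5 → α) : Matrix.vecCons a u (4 : Fin 6) = u 3 := rfl
@[simp] lemma vc6_5 (a : α) (u : Fin 5 → α) : Matrix.vecCons a u (5 : Fin 6) = u 4 := rfl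

@[simp] lemma vmk0 {n : ℕ} (a : α) (u : Fin n → α) (h : 0 < n+1) :
    Matrix.vecCons a u ⟨0, h⟩ = a := rfl
@[simp] lemma vmk1 {n : ℕ} (a : α) (u : Fin (n+1) → α) (h : 1 < n+2) :
    Matrix.vecCons a u ⟨1, h⟩ = u ⟨0, by omega⟩ := rfl
@[simp] lemma vmk2 {n : ℕ} (a : α) (u : Fin (n+2) → α) (h : 2 < n+3) :
    Matrix.vecCons a u ⟨2, h⟩ = u ⟨1, by omega⟩ := rfl
@[simp] lemma vmk3 {n : ℕ} (a : α) (u : Fin (n+3) → α) (h : 3 < n+4) :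
    Matrix.vecCons a u ⟨3, h⟩ = u ⟨2, by omega⟩ := rfl
@[simp] lemma vmk4 {n : ℕ} (a : α) (u : Fin (n+4) → α) (h : 4 < n+5) :
    Matrix.vecCons a u ⟨4, h⟩ = u ⟨3, by omega⟩ := rfl
@[simp] lemma vmk5 {n : ℕ} (a : α) (u : Fin (n+5) → α) (h : 5 < n+6) :
    Matrix.vecCons a u ⟨5, h⟩ = u ⟨4, by omega⟩ := rfl

end aux

noncomputable def hexM : Matrix (Fin 6) (Fin 6) ℂ :=
  !![0, 0, 1, (Real.sqrt 2 : ℂ), (Real.sqrt 2 : ℂ), 1;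
     1, 0, 0, 1, 1 - Complex.I, (Real.sqrt 2 : ℂ);
     1 + Complex.I, 1, 0, 0, 1, (Real.sqrt 2 : ℂ) * Complex.I;
     (Real.sqrt 2 : ℂ) * Complex.I, (Real.sqrt 2 : ℂ) * Complex.I, -1, 0, 0, -1;
     1, 1 + Complex.I, (Real.sqrt 2 : ℂ) * Complex.I, 1, 0, 0;
     0, 1, (Real.sqrt 2 : ℂ), 1 - Complex.I, 1, 0]

noncomputable def hexA : Matrix (Fin 6) (Fin 3) ℂ :=
  !![1, 0, 0;
     0, 1, 0;
     0, 0, 1;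
     -1, (Real.sqrt 2 : ℂ), (Real.sqrt 2 : ℂ) * Complex.I;
     (Real.sqrt 2 : ℂ) * Complex.I, 1 - 2 * Complex.I, 1 + Complex.I;
     (Real.sqrt 2 : ℂ), -1 - Complex.I, 1]

noncomputable def hexB : Matrix (Fin 3) (Fin 6) ℂ :=
  !![0, 0, 1, (Real.sqrt 2 : ℂ), (Real.sqrt 2 : ℂ), 1;
     1, 0, 0, 1, 1 - Complex.I, (Real.sqrt 2 : ℂ);
     1 + Complex.I, 1, 0, 0, 1, (Real.sqrt 2 : ℂ) * Complex.I]

def hexP : Matrix (Fin 3) (Fin 6) ℂ :=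
  !![1,0,0,0,0,0; 0,1,0,0,0,0; 0,0,1,0,0,0]

def hexQ : Matrix (Fin 6) (Fin 3) ℂ :=
  !![1,0,0; 0,1,0; 0,0,1; 0,0,0; 0,0,0; 0,0,0]

noncomputable def hexN : Matrix (Fin 3) (Fin 3) ℂ :=
  !![0, 0, 1; 1, 0, 0; 1 + Complex.I, 1, 0]

lemma hexs2 : ((Real.sqrt 2 : ℝ) : ℂ) ^ 2 = 2 := by
  rw [← Complex.ofReal_pow, Real.sq_sqrt (by norm_num : (0:ℝ) ≤ 2)]
  norm_num

lemma hexMAB : hexM = hexA * hexB := by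
  ext i j
  fin_cases i <;> fin_cases j
  all_goals
    simp only [hexM, hexA, hexB, Matrix.mul_apply, Fin.sum_univ_three, Matrix.of_apply,
      vmk0, vmk1, vmk2, vmk3, vmk4, vmk5, vc1_0, vc2_0, vc2_1, vc3_0, vc3_1, vc3_2, vc4_0, vc4_1, vc4_2, vc4_3, vc5_0, vc5_1, vc5_2, vc5_3, vc5_4, vc6_0, vc6_1, vc6_2, vc6_3, vc6_4, vc6_5]
  all_goals
    first
      | ring1
      | (ring_nf; simp only [Complex.I_sq, hexs2]; ring_nf)
      | norm_num [Matrix.vecHead, Matrix.vecTail]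

noncomputable def hexMQ : Matrix (Fin 6) (Fin 3) ℂ :=
  !![0,0,1; 1,0,0; 1+Complex.I,1,0; (Real.sqrt 2:ℂ)*Complex.I, (Real.sqrt 2:ℂ)*Complex.I, -1;
     1, 1+Complex.I, (Real.sqrt 2:ℂ)*Complex.I; 0,1,(Real.sqrt 2:ℂ)]

lemma hexMQ_eq : hexM * hexQ = hexMQ := by
  ext i j
  fin_cases i <;> fin_cases j
  all_goals
    simp only [hexM, hexQ, hexMQ, Matrix.mul_apply, Fin.sum_univ_three, Fin.sum_univ_six,
      Matrix.of_apply, vmk0, vmk1, vmk2, vmk3, vmk4, vmk5, vc1_0, vc2_0, vc2_1, vc3_0, vc3_1, vc3_2, vc4_0, vc4_1, vc4_2, vc4_3, vc5_0, vc5_1, vc5_2, vc5_3, vc5_4, vc6_0, vc6_1, vc6_2, vc6_3, vc6_4, vc6_5]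
  all_goals
    first
      | ring1
      | norm_num [Matrix.vecHead, Matrix.vecTail]

lemma hexNPQ : hexN = hexP * (hexM * hexQ) := by
  rw [hexMQ_eq]
  ext i j
  fin_cases i <;> fin_cases j
  all_goals
    simp only [hexN, hexP, hexMQ, Matrix.mul_apply, Fin.sum_univ_six,
      Matrix.of_apply, vmk0, vmk1, vmk2, vmk3, vmk4, vmk5, vc1_0, vc2_0, vc2_1, vc3_0, vc3_1, vc3_2, vc4_0, vc4_1, vc4_2, vc4_3, vc5_0, vc5_1, vc5_2, vc5_3, vc5_4, vc6_0, vc6_1, vc6_2, vc6_3, vc6_4, vc6_5]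
  all_goals
    first
      | ring1
      | norm_num [Matrix.vecHead, Matrix.vecTail]

lemma hexNdet : hexN.det = 1 := by
  simp [hexN, Matrix.det_fin_three]

lemma hexM_rank : hexM.rank = 3 := by
  refine le_antisymm ?_ ?_
  · calc hexM.rank = (hexA * hexB).rank := by rw [hexMAB]
      _ ≤ hexB.rank := Matrix.rank_mul_le_right hexA hexB
      _ ≤ 3 := by simpa using hexB.rank_le_card_height
  · have hNunit : IsUnit hexN := by
      apply (Matrix.isUnit_iff_isUnit_det hexN).mpr
      rw [hexNdet]; exact isUnit_one
    have h3 : hexN.rank = 3 := by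
      rw [Matrix.rank_of_isUnit hexN hNunit]; simp
    calc (3 : ℕ) = hexN.rank := h3.symm
      _ = (hexP * (hexM * hexQ)).rank := by rw [hexNPQ]
      _ ≤ (hexM * hexQ).rank := Matrix.rank_mul_le_right hexP (hexM * hexQ)
      _ ≤ hexM.rank := Matrix.rank_mul_le_left hexM hexQ

theorem hexagon_cpsd_minimal_certificate :
    let M : Matrix (Fin 6) (Fin 6) ℂ :=
      !![0, 0, 1, (Real.sqrt 2 : ℂ), (Real.sqrt 2 : ℂ), 1;
         1, 0, 0, 1, 1 - Complex.I, (Real.sqrt 2 : ℂ);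
         1 + Complex.I, 1, 0, 0, 1, (Real.sqrt 2 : ℂ) * Complex.I;
         (Real.sqrt 2 : ℂ) * Complex.I, (Real.sqrt 2 : ℂ) * Complex.I, -1, 0, 0, -1;
         1, 1 + Complex.I, (Real.sqrt 2 : ℂ) * Complex.I, 1, 0, 0;
         0, 1, (Real.sqrt 2 : ℂ), 1 - Complex.I, 1, 0]
    let S : Matrix (Fin 6) (Fin 6) ℝ :=
      !![0, 0, 1, 2, 2, 1;
         1, 0, 0, 1, 2, 2;
         2, 1, 0, 0, 1, 2;
         2, 2, 1, 0, 0, 1;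
         1, 2, 2, 1, 0, 0;
         0, 1, 2, 2, 1, 0]
    M.rank = 3 ∧ ∀ i j, ‖M i j‖ ^ 2 = S i j := by
  intro M S
  have hM : M = hexM := rfl
  have hsr : Real.sqrt 2 * Real.sqrt 2 = 2 := Real.mul_self_sqrt (by norm_num)
  refine ⟨by rw [hM]; exact hexM_rank, ?_⟩
  intro i j
  fin_cases i <;> fin_cases j <;>
    simp only [M, S, Complex.sq_norm, Complex.normSq_apply,
      Matrix.cons_val', Matrix.cons_val_zero, Matrix.cons_val_one, Matrix.head_cons,
      Matrix.empty_val', Matrix.cons_val_fin_one, Matrix.head_fin_const, Matrix.of_apply,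
      vmk0, vmk1, vmk2, vmk3, vmk4, vmk5, vc1_0, vc2_0, vc2_1, vc3_0, vc3_1, vc3_2, vc4_0, vc4_1, vc4_2, vc4_3, vc5_0, vc5_1, vc5_2, vc5_3, vc5_4, vc6_0, vc6_1, vc6_2, vc6_3, vc6_4, vc6_5,
      Complex.mul_re, Complex.mul_im, Complex.add_re, Complex.add_im,
      Complex.sub_re, Complex.sub_im, Complex.neg_re, Complex.neg_im,
      Complex.one_re, Complex.one_im, Complex.zero_re, Complex.zero_im,
      Complex.I_re, Complex.I_im, Complex.ofReal_re, Complex.ofReal_im] <;>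
    nlinarith [hsr]
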